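/- Let (X, Y) be a random vector with X valued in [0,1]^d and Y real-valued and square-integrable, let Θ and Θ' be independent, identically distributed ℝ^q-valued random vectors, with (Θ, Θ') independent of (X, Y), and let T : [0,1]^d × ℝ^q → ℝ be a measurable function with E[T(X, Θ)²] < ∞. Then E[(Y − E[T(X, Θ) | X])²] = E[(Y − T(X, Θ))(Y − T(X, Θ'))]. -/

import Mathlib

open MeasureTheory ProbabilityTheory

lemma l2_mul_integrable {Ω : Type*} [MeasurableSpace Ω] {μ : Measure Ω} {f g : Ω → ℝ}
    (hf : MemLp f 2 μ) (hg : MemLp g 2 μ) :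
    Integrable (fun ω => f ω * g ω) μ := by
  rw [← memLp_one_iff_integrable]
  have h := hg.smul (𝕜 := ℝ) hf (p := 2) (q := 2) (r := 1)
  exact h

/-- Let `(X, Y)` be a random vector with `X` valued in `[0,1]^d` and `Y` square integrable,
`Θ, Θ'` i.i.d. with `(Θ, Θ')` independent of `(X, Y)`, and `T` measurable with
`E[T(X, Θ)²] < ∞`.  Then `E[(Y − E[T(X, Θ) | X])²] = E[(Y − T(X, Θ))(Y − T(X, Θ'))]`. -/
theorem integral_sq_sub_condexp_eq_integral_mul_residuals {Ω : Type*} [MeasurableSpace Ω]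
    (μ : Measure Ω) [IsProbabilityMeasure μ]
    {d q : ℕ} (X : Ω → (Fin d → ℝ)) (Y : Ω → ℝ) (Θ Θ' : Ω → (Fin q → ℝ))
    (hX : Measurable X) (hXval : ∀ ω, X ω ∈ Set.Icc (0 : Fin d → ℝ) 1)
    (hY : MemLp Y 2 μ)
    (hΘmeas : Measurable Θ) (hΘ'meas : Measurable Θ')
    (hΘindep : IndepFun Θ Θ' μ)
    (hΘident : Measure.map Θ μ = Measure.map Θ' μ)
    (hindep : IndepFun (fun ω => (Θ ω, Θ' ω)) (fun ω => (X ω, Y ω)) μ)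
    (T : (Fin d → ℝ) → (Fin q → ℝ) → ℝ)
    (hT : Measurable fun p : (Fin d → ℝ) × (Fin q → ℝ) => T p.1 p.2)
    (hTsq : MemLp (fun ω => T (X ω) (Θ ω)) 2 μ) :
    (∫ ω, (Y ω - (μ[fun ω' => T (X ω') (Θ ω')|MeasurableSpace.comap X inferInstance]) ω) ^ 2 ∂μ)
      = ∫ ω, (Y ω - T (X ω) (Θ ω)) * (Y ω - T (X ω) (Θ' ω)) ∂μ := by
  have hYm : AEMeasurable Y μ := hY.aestronglyMeasurable.aemeasurable
  set ν : Measure (Fin q → ℝ) := μ.map Θ with hν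
  set ρ : Measure ((Fin d → ℝ) × ℝ) := μ.map (fun ω => (X ω, Y ω)) with hρ
  have hXYm : AEMeasurable (fun ω => (X ω, Y ω)) μ := hX.aemeasurable.prodMk hYm
  haveI : IsProbabilityMeasure ν := Measure.isProbabilityMeasure_map hΘmeas.aemeasurable
  haveI : IsProbabilityMeasure ρ := Measure.isProbabilityMeasure_map hXYm
  haveI : IsProbabilityMeasure (μ.map X) := Measure.isProbabilityMeasure_map hX.aemeasurable
  -- g x = E[T(x, Θ)]
  set g : (Fin d → ℝ) → ℝ := fun x => ∫ θ, T x θ ∂ν with hgdef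
  have hg : Measurable g :=
    (hT.stronglyMeasurable.integral_prod_right (ν := ν)).measurable
  -- law of (X, Θ)
  have hIndXΘ : IndepFun X Θ μ :=
    ((hindep.comp measurable_fst measurable_fst).symm :)
  have hXΘ : μ.map (fun ω => (X ω, Θ ω)) = (μ.map X).prod ν :=
    (indepFun_iff_map_prod_eq_prod_map_map hX.aemeasurable hΘmeas.aemeasurable).mp hIndXΘ
  -- law of (X, Θ')
  have hIndXΘ' : IndepFun X Θ' μ :=
    ((hindep.comp measurable_snd measurable_fst).symm :)
  have hXΘ' : μ.map (fun ω => (X ω, Θ' ω)) = (μ.map X).prod ν := by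
    rw [(indepFun_iff_map_prod_eq_prod_map_map hX.aemeasurable hΘ'meas.aemeasurable).mp hIndXΘ',
      ← hΘident]
  -- law of (Θ, Θ')
  have hΘΘ' : μ.map (fun ω => (Θ ω, Θ' ω)) = ν.prod ν := by
    rw [(indepFun_iff_map_prod_eq_prod_map_map hΘmeas.aemeasurable hΘ'meas.aemeasurable).mp hΘindep,
      ← hΘident]
  -- law of ((X, Y), (Θ, Θ'))
  have hbig : μ.map (fun ω => ((X ω, Y ω), (Θ ω, Θ' ω))) = ρ.prod (ν.prod ν) := by
    rw [(indepFun_iff_map_prod_eq_prod_map_map hXYm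
      (hΘmeas.aemeasurable.prodMk hΘ'meas.aemeasurable)).mp hindep.symm, hΘΘ']
  -- MemLp on product
  have hT2 : MemLp (fun p : (Fin d → ℝ) × (Fin q → ℝ) => T p.1 p.2) 2 ((μ.map X).prod ν) := by
    rw [← hXΘ]
    exact (memLp_map_measure_iff hT.aestronglyMeasurable
      (hX.aemeasurable.prodMk hΘmeas.aemeasurable)).mpr hTsq
  have hTsq' : MemLp (fun ω => T (X ω) (Θ' ω)) 2 μ := by
    have := (memLp_map_measure_iff hT.aestronglyMeasurable
      (hX.aemeasurable.prodMk hΘ'meas.aemeasurable)).mp (by rw [hXΘ']; exact hT2)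
    exact this
  have hTprodInt : Integrable (fun p : (Fin d → ℝ) × (Fin q → ℝ) => T p.1 p.2)
      ((μ.map X).prod ν) := hT2.integrable one_le_two
  have hTint : Integrable (fun ω => T (X ω) (Θ ω)) μ := hTsq.integrable one_le_two
  -- integrability of g ∘ X
  have hgint : Integrable g (μ.map X) := hTprodInt.integral_prod_left
  have hgXint : Integrable (fun ω => g (X ω)) μ :=
    (integrable_map_measure hg.aestronglyMeasurable hX.aemeasurable).mp hgint
  -- the conditional expectation is g ∘ X
  have hF : (fun ω => g (X ω))
      =ᵐ[μ] μ[fun ω' => T (X ω') (Θ ω')|MeasurableSpace.comap X inferInstance] := by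
    refine ae_eq_condExp_of_forall_setIntegral_eq hX.comap_le hTint
      (fun s _ _ => hgXint.integrableOn) ?_ ?_
    · rintro s ⟨t, ht, rfl⟩ -
      have hpre : X ⁻¹' t = (fun ω => (X ω, Θ ω)) ⁻¹' (t ×ˢ Set.univ) := by
        ext ω; simp
      rw [← setIntegral_map ht hg.aestronglyMeasurable hX.aemeasurable, hpre,
        ← setIntegral_map (ht.prod MeasurableSet.univ) hT.aestronglyMeasurable
          (hX.aemeasurable.prodMk hΘmeas.aemeasurable), hXΘ]
      have hres : ((μ.map X).prod ν).restrict (t ×ˢ Set.univ)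
          = ((μ.map X).restrict t).prod ν := by
        rw [← Measure.prod_restrict, Measure.restrict_univ]
      rw [hres, integral_prod _ (by rw [← hres]; exact hTprodInt.restrict)]
    · refine (Measurable.stronglyMeasurable ?_).aestronglyMeasurable
      exact hg.comp (Measurable.of_comap_le le_rfl)
  -- the common value
  have hgρ : AEStronglyMeasurable (fun p : (Fin d → ℝ) × ℝ => (p.2 - g p.1) ^ 2) ρ :=
    ((measurable_snd.sub (hg.comp measurable_fst)).pow_const 2).aestronglyMeasurable
  -- LHS
  have hLHS : (∫ ω, (Y ω -
      (μ[fun ω' => T (X ω') (Θ ω')|MeasurableSpace.comap X inferInstance]) ω) ^ 2 ∂μ)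
      = ∫ p, (p.2 - g p.1) ^ 2 ∂ρ := by
    rw [integral_map hXYm hgρ]
    refine integral_congr_ae ?_
    filter_upwards [hF] with ω hω
    rw [← hω]
  -- RHS
  set f : ((Fin d → ℝ) × ℝ) × ((Fin q → ℝ) × (Fin q → ℝ)) → ℝ :=
    fun p => (p.1.2 - T p.1.1 p.2.1) * (p.1.2 - T p.1.1 p.2.2) with hfdef
  have hfmeas : Measurable f := by
    apply Measurable.mul
    · exact (measurable_snd.comp measurable_fst).sub
        (hT.comp ((measurable_fst.comp measurable_fst).prodMk
          (measurable_fst.comp measurable_snd)))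
    · exact (measurable_snd.comp measurable_fst).sub
        (hT.comp ((measurable_fst.comp measurable_fst).prodMk
          (measurable_snd.comp measurable_snd)))
  have hWm : AEMeasurable (fun ω => ((X ω, Y ω), (Θ ω, Θ' ω))) μ :=
    hXYm.prodMk (hΘmeas.aemeasurable.prodMk hΘ'meas.aemeasurable)
  have hfWint : Integrable (fun ω => f ((X ω, Y ω), (Θ ω, Θ' ω))) μ :=
    l2_mul_integrable (hY.sub hTsq) (hY.sub hTsq')
  have hfint : Integrable f (ρ.prod (ν.prod ν)) := by
    rw [← hbig]
    exact (integrable_map_measure hfmeas.aestronglyMeasurable hWm).mpr hfWint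
  -- a.e. section integrability
  have hae : ∀ᵐ x ∂(μ.map X), Integrable (fun θ => T x θ) ν := hTprodInt.prod_right_ae
  have haeρ : ∀ᵐ p ∂ρ, Integrable (fun θ => T p.1 θ) ν := by
    have hfst : ρ.map Prod.fst = μ.map X := Measure.fst_map_prodMk₀ hYm
    exact ae_of_ae_map measurable_fst.aemeasurable (by rw [hfst]; exact hae)
  have hRHS : (∫ ω, (Y ω - T (X ω) (Θ ω)) * (Y ω - T (X ω) (Θ' ω)) ∂μ)
      = ∫ p, (p.2 - g p.1) ^ 2 ∂ρ := by
    calc ∫ ω, (Y ω - T (X ω) (Θ ω)) * (Y ω - T (X ω) (Θ' ω)) ∂μ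
        = ∫ z, f z ∂(ρ.prod (ν.prod ν)) := by
          rw [← hbig, integral_map hWm hfmeas.aestronglyMeasurable]
      _ = ∫ p, ∫ z, f (p, z) ∂(ν.prod ν) ∂ρ := integral_prod f hfint
      _ = ∫ p, (p.2 - g p.1) ^ 2 ∂ρ := by
          refine integral_congr_ae ?_
          filter_upwards [haeρ] with p hp
          have h1 : ∫ z : (Fin q → ℝ) × (Fin q → ℝ),
              (p.2 - T p.1 z.1) * (p.2 - T p.1 z.2) ∂(ν.prod ν)
              = (∫ θ, (p.2 - T p.1 θ) ∂ν) * (∫ θ, (p.2 - T p.1 θ) ∂ν) :=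
            integral_prod_mul (fun θ => p.2 - T p.1 θ) (fun θ => p.2 - T p.1 θ)
          have h2 : (∫ θ, (p.2 - T p.1 θ) ∂ν) = p.2 - g p.1 := by
            rw [integral_sub (integrable_const _) hp, integral_const]
            simp [measure_univ]
            rfl
          calc ∫ z, f (p, z) ∂(ν.prod ν)
              = (∫ θ, (p.2 - T p.1 θ) ∂ν) * (∫ θ, (p.2 - T p.1 θ) ∂ν) := h1
            _ = (p.2 - g p.1) ^ 2 := by rw [h2, sq]
  rw [hLHS, hRHS]
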